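/- Let ρ be a two-qubit Schmidt-correlated state with coefficients c1, c2, c4, and let U1, U2 be 2×2 unitary matrices such that ρ' := (U1⊗U2) ρ (U1⊗U2)† is again of Schmidt-correlated form (i.e., all entries of ρ' vanish except possibly those in rows/columns indexed by |00⟩ and |11⟩). Then (c1 − c4)·(U1)_{11}·conj((U1)_{21}) = 0 and (c1 − c4)·(U2)_{11}·conj((U2)_{21}) = 0, where (U)_{jk} denotes the (j,k) entry. -/

import Mathlib

open Matrix Kronecker

/-- The two-qubit Schmidt-correlated state
`ρ = c1|00⟩⟨00| + c2|00⟩⟨11| + conj(c2)|11⟩⟨00| + c4|11⟩⟨11|`. -/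
noncomputable def scState (c1 c4 : ℝ) (c2 : ℂ) :
    Matrix (Fin 2 × Fin 2) (Fin 2 × Fin 2) ℂ :=
  Matrix.of fun p q =>
    if p = (0, 0) ∧ q = (0, 0) then (c1 : ℂ)
    else if p = (0, 0) ∧ q = (1, 1) then c2
    else if p = (1, 1) ∧ q = (0, 0) then (starRingEnd ℂ) c2
    else if p = (1, 1) ∧ q = (1, 1) then (c4 : ℂ)
    else 0

/-- A 4×4 matrix is of Schmidt-correlated form if its only possibly nonzero entries
are in the rows/columns indexed by `|00⟩` and `|11⟩`. -/
def IsSCform (M : Matrix (Fin 2 × Fin 2) (Fin 2 × Fin 2) ℂ) : Prop :=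
  ∀ p q, M p q ≠ 0 → (p = (0, 0) ∨ p = (1, 1)) ∧ (q = (0, 0) ∨ q = (1, 1))

/-- If the local unitary image of an SC state is again of SC form, then
`(c1 − c4)·(U1)₁₁·conj((U1)₂₁) = 0` and `(c1 − c4)·(U2)₁₁·conj((U2)₂₁) = 0`. -/
theorem sc_form_constraint (c1 c4 : ℝ) (c2 : ℂ)
    (hc1 : 0 ≤ c1) (hc4 : 0 ≤ c4) (hsum : c1 + c4 = 1)
    (hc2 : ‖c2‖ ^ 2 ≤ c1 * c4)
    (U1 U2 : Matrix (Fin 2) (Fin 2) ℂ)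
    (hU1 : U1 ∈ Matrix.unitaryGroup (Fin 2) ℂ) (hU2 : U2 ∈ Matrix.unitaryGroup (Fin 2) ℂ)
    (hform : IsSCform ((U1 ⊗ₖ U2) * scState c1 c4 c2 * (U1 ⊗ₖ U2)ᴴ)) :
    ((c1 : ℂ) - (c4 : ℂ)) * U1 0 0 * (starRingEnd ℂ) (U1 1 0) = 0 ∧
    ((c1 : ℂ) - (c4 : ℂ)) * U2 0 0 * (starRingEnd ℂ) (U2 1 0) = 0 := by
  classical
  set M := (U1 ⊗ₖ U2) * scState c1 c4 c2 * (U1 ⊗ₖ U2)ᴴ with hM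
  have entry_zero : ∀ p q : Fin 2 × Fin 2,
      ¬ ((p = (0,0) ∨ p = (1,1)) ∧ (q = (0,0) ∨ q = (1,1))) → M p q = 0 := by
    intro p q hpq
    by_contra h
    exact hpq (hform p q h)
  have h1 : M (0,0) (1,0) = 0 := entry_zero _ _ (by decide)
  have h2 : M (0,1) (1,1) = 0 := entry_zero _ _ (by decide)
  have h3 : M (0,0) (0,1) = 0 := entry_zero _ _ (by decide)
  have h4 : M (1,0) (1,1) = 0 := entry_zero _ _ (by decide)
  have expand : ∀ p q : Fin 2 × Fin 2, M p q =
      c1 * (U1 p.1 0 * U2 p.2 0) * ((starRingEnd ℂ) (U1 q.1 0) * (starRingEnd ℂ) (U2 q.2 0))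
    + c2 * (U1 p.1 0 * U2 p.2 0) * ((starRingEnd ℂ) (U1 q.1 1) * (starRingEnd ℂ) (U2 q.2 1))
    + (starRingEnd ℂ) c2 * (U1 p.1 1 * U2 p.2 1) *
        ((starRingEnd ℂ) (U1 q.1 0) * (starRingEnd ℂ) (U2 q.2 0))
    + c4 * (U1 p.1 1 * U2 p.2 1) * ((starRingEnd ℂ) (U1 q.1 1) * (starRingEnd ℂ) (U2 q.2 1)) := by
    intro p q
    simp only [hM, Matrix.mul_apply, Fintype.sum_prod_type, Fin.sum_univ_two,
      kroneckerMap_apply, conjTranspose_apply, scState, of_apply, Matrix.star_apply,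
      Complex.star_def, Prod.mk.injEq]
    norm_num
    ring
  rw [expand] at h1 h2 h3 h4
  simp only at h1 h2 h3 h4
  have hu1 : star U1 * U1 = 1 := hU1.1
  have hu2 : U1 * star U1 = 1 := hU1.2
  have hv1 : star U2 * U2 = 1 := hU2.1
  have hv2 : U2 * star U2 = 1 := hU2.2
  have nv0 : (starRingEnd ℂ) (U2 0 0) * U2 0 0 + (starRingEnd ℂ) (U2 1 0) * U2 1 0 = 1 := by
    have := congrFun (congrFun hv1 0) 0
    simpa [Matrix.mul_apply, Fin.sum_univ_two, Matrix.one_apply, Matrix.star_apply,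
      Complex.star_def] using this
  have nv1 : (starRingEnd ℂ) (U2 0 1) * U2 0 1 + (starRingEnd ℂ) (U2 1 1) * U2 1 1 = 1 := by
    have := congrFun (congrFun hv1 1) 1
    simpa [Matrix.mul_apply, Fin.sum_univ_two, Matrix.one_apply, Matrix.star_apply,
      Complex.star_def] using this
  have cv10 : (starRingEnd ℂ) (U2 0 1) * U2 0 0 + (starRingEnd ℂ) (U2 1 1) * U2 1 0 = 0 := by
    have := congrFun (congrFun hv1 1) 0
    simpa [Matrix.mul_apply, Fin.sum_univ_two, Matrix.one_apply, Matrix.star_apply,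
      Complex.star_def] using this
  have cv01 : (starRingEnd ℂ) (U2 0 0) * U2 0 1 + (starRingEnd ℂ) (U2 1 0) * U2 1 1 = 0 := by
    have := congrFun (congrFun hv1 0) 1
    simpa [Matrix.mul_apply, Fin.sum_univ_two, Matrix.one_apply, Matrix.star_apply,
      Complex.star_def] using this
  have nu0 : (starRingEnd ℂ) (U1 0 0) * U1 0 0 + (starRingEnd ℂ) (U1 1 0) * U1 1 0 = 1 := by
    have := congrFun (congrFun hu1 0) 0
    simpa [Matrix.mul_apply, Fin.sum_univ_two, Matrix.one_apply, Matrix.star_apply,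
      Complex.star_def] using this
  have nu1 : (starRingEnd ℂ) (U1 0 1) * U1 0 1 + (starRingEnd ℂ) (U1 1 1) * U1 1 1 = 1 := by
    have := congrFun (congrFun hu1 1) 1
    simpa [Matrix.mul_apply, Fin.sum_univ_two, Matrix.one_apply, Matrix.star_apply,
      Complex.star_def] using this
  have cu10 : (starRingEnd ℂ) (U1 0 1) * U1 0 0 + (starRingEnd ℂ) (U1 1 1) * U1 1 0 = 0 := by
    have := congrFun (congrFun hu1 1) 0
    simpa [Matrix.mul_apply, Fin.sum_univ_two, Matrix.one_apply, Matrix.star_apply,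
      Complex.star_def] using this
  have cu01 : (starRingEnd ℂ) (U1 0 0) * U1 0 1 + (starRingEnd ℂ) (U1 1 0) * U1 1 1 = 0 := by
    have := congrFun (congrFun hu1 0) 1
    simpa [Matrix.mul_apply, Fin.sum_univ_two, Matrix.one_apply, Matrix.star_apply,
      Complex.star_def] using this
  have ou : U1 0 0 * (starRingEnd ℂ) (U1 1 0) + U1 0 1 * (starRingEnd ℂ) (U1 1 1) = 0 := by
    have := congrFun (congrFun hu2 0) 1
    simpa [Matrix.mul_apply, Fin.sum_univ_two, Matrix.one_apply, Matrix.star_apply,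
      Complex.star_def] using this
  have ov : U2 0 0 * (starRingEnd ℂ) (U2 1 0) + U2 0 1 * (starRingEnd ℂ) (U2 1 1) = 0 := by
    have := congrFun (congrFun hv2 0) 1
    simpa [Matrix.mul_apply, Fin.sum_univ_two, Matrix.one_apply, Matrix.star_apply,
      Complex.star_def] using this
  constructor
  · linear_combination h1 + h2 - (c1 : ℂ) * U1 0 0 * (starRingEnd ℂ) (U1 1 0) * nv0
      - c2 * U1 0 0 * (starRingEnd ℂ) (U1 1 1) * cv10
      - (starRingEnd ℂ) c2 * U1 0 1 * (starRingEnd ℂ) (U1 1 0) * cv01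
      - (c4 : ℂ) * U1 0 1 * (starRingEnd ℂ) (U1 1 1) * nv1
      - (c4 : ℂ) * ou
  · linear_combination h3 + h4 - (c1 : ℂ) * U2 0 0 * (starRingEnd ℂ) (U2 1 0) * nu0
      - c2 * U2 0 0 * (starRingEnd ℂ) (U2 1 1) * cu10
      - (starRingEnd ℂ) c2 * U2 0 1 * (starRingEnd ℂ) (U2 1 0) * cu01
      - (c4 : ℂ) * U2 0 1 * (starRingEnd ℂ) (U2 1 1) * nu1
      - (c4 : ℂ) * ov
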